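/- The matrix M indexed by pairs (i,j), (k,l) with 1 ≤ i < j ≤ n and 1 ≤ k < l ≤ n, defined by the given case formula, has nonzero determinant as an element of ℤ[q^{±1}, t^{±1}]. -/

import Mathlib

open LaurentPolynomial

/-- Index set for the Lawrence-Krammer basis: pairs `(j,k)` with `0 ≤ j < k ≤ n-1`
(0-based indexing of the punctures). -/
def LKIdx (n : ℕ) := {p : Fin n × Fin n // p.1 < p.2}

instance (n : ℕ) : Fintype (LKIdx n) := by unfold LKIdx; infer_instance
instance (n : ℕ) : DecidableEq (LKIdx n) := by unfold LKIdx; infer_instance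

/-- Kronecker delta on a pair of indices. -/
def lkDelta {R : Type*} [CommRing R] (a b x y : ℕ) : R :=
  if a = x ∧ b = y then 1 else 0

/-- The coefficient of `v_{a,b}` in `ρ(σ_i)·v_{j,k}` (0-based indices), following the
explicit formula for the Lawrence-Krammer representation:
`ρ(σ_i)v_{j,k} = v_{j,k}` if `i ∉ {j-1,j,k-1,k}`;
`q v_{i,k} + (q²-q) v_{i,j} + (1-q) v_{j,k}` if `i = j-1`;
`v_{j+1,k}` if `i = j ≠ k-1`; `q v_{j,i} + (1-q) v_{j,k} - (q²-q)t v_{i,k}` if `i = k-1 ≠ j`;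
`v_{j,k+1}` if `i = k`; `-tq² v_{j,k}` if `i = j = k-1`. -/
def lkEntry {R : Type*} [CommRing R] (q t : R) (i a b j k : ℕ) : R :=
  if i + 1 = j then
    q * lkDelta a b i k + (q ^ 2 - q) * lkDelta a b i j + (1 - q) * lkDelta a b j k
  else if i = j ∧ i + 1 = k then -(t * q ^ 2) * lkDelta a b j k
  else if i = j then lkDelta a b (j + 1) k
  else if i + 1 = k then
    q * lkDelta a b j i + (1 - q) * lkDelta a b j k - (q ^ 2 - q) * t * lkDelta a b i k
  else if i = k then lkDelta a b j (k + 1)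
  else lkDelta a b j k

/-- The matrix of `ρ(σ_i)` on the free module with basis `v_{j,k}`, `0 ≤ j < k < n`. -/
def lkMat {R : Type*} [CommRing R] (q t : R) (n : ℕ) (i : ℕ) :
    Matrix (LKIdx n) (LKIdx n) R :=
  fun p p' => lkEntry q t i p.1.1 p.1.2 p'.1.1 p'.1.2

/-- The Laurent polynomial ring `ℤ[q^{±1}, t^{±1}]`. -/
abbrev LKRing : Type := LaurentPolynomial (LaurentPolynomial ℤ)

/-- The variable `q` in `ℤ[q^{±1}, t^{±1}]`. -/
noncomputable def qLK : LKRing := T 1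

/-- The variable `t` in `ℤ[q^{±1}, t^{±1}]`. -/
noncomputable def tLK : LKRing := C (T 1)

/-- The entry `M_{(i,j),(k,l)}` of the intersection-form matrix (indices satisfy
`i < j`, `k < l`): `(1-qt)(1+q²t)` if `k=i, j=l`; `-q²t²(q-1)` if `i=k<j<l` or `i<k<j=l`;
`-(q-1)` if `k=i<l<j` or `k<i<j=l`; `t(q-1)` if `i<j=k<l`; `q²t(q-1)` if `k<l=i<j`;
`-t(q-1)²(1+qt)` if `i<k<j<l`; `(q-1)²(1+qt)` if `k<i<l<j`; `0` otherwise. -/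
def lkFormEntry {R : Type*} [CommRing R] (q t : R) (i j k l : ℕ) : R :=
  if i = k ∧ j = l then (1 - q * t) * (1 + q ^ 2 * t)
  else if (i = k ∧ j < l) ∨ (i < k ∧ j = l) then -(q ^ 2 * t ^ 2 * (q - 1))
  else if (i = k ∧ l < j) ∨ (k < i ∧ j = l) then -(q - 1)
  else if j = k then t * (q - 1)
  else if l = i then q ^ 2 * t * (q - 1)
  else if i < k ∧ k < j ∧ j < l then -(t * (q - 1) ^ 2 * (1 + q * t))
  else if k < i ∧ i < l ∧ l < j then (q - 1) ^ 2 * (1 + q * t)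
  else 0

/-- The matrix `M` of intersection products, indexed by pairs `(i,j)` with `i < j`. -/
def lkFormMat {R : Type*} [CommRing R] (q t : R) (n : ℕ) :
    Matrix (LKIdx n) (LKIdx n) R :=
  fun p p' => lkFormEntry q t p.1.1 p.1.2 p'.1.1 p'.1.2

/-- The matrix `M` has nonzero determinant in `ℤ[q^{±1}, t^{±1}]`. -/

noncomputable def lkGexp : Multiplicative ℤ →* ℝ where
  toFun := fun n => (2:ℝ) ^ (Multiplicative.toAdd n)
  map_one' := by simp
  map_mul' := fun a b => by simp [zpow_add₀ (two_ne_zero (α := ℝ))]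

noncomputable def lkPsiR : LaurentPolynomial ℤ →+* ℝ :=
  AddMonoidAlgebra.liftNCRingHom (Int.castRingHom ℝ) lkGexp (fun _ _ => Commute.all _ _)

noncomputable def lkPhiR : LKRing →+* ℝ :=
  AddMonoidAlgebra.liftNCRingHom lkPsiR 1 (fun _ _ => Commute.all _ _)

lemma lkPhiR_q : lkPhiR qLK = 1 := by
  show AddMonoidAlgebra.liftNC _ _ (AddMonoidAlgebra.single 1 1) = 1
  rw [AddMonoidAlgebra.liftNC_single]
  simp [lkPsiR, AddMonoidAlgebra.liftNCRingHom]

lemma lkPhiR_t : lkPhiR tLK = 2 := by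
  show AddMonoidAlgebra.liftNC _ _ (AddMonoidAlgebra.single 0 (T 1)) = 2
  rw [AddMonoidAlgebra.liftNC_single]
  show lkPsiR (T 1) * 1 = 2
  show AddMonoidAlgebra.liftNC _ _ (AddMonoidAlgebra.single 1 1) * 1 = 2
  rw [AddMonoidAlgebra.liftNC_single]
  simp [lkGexp]

lemma map_lkFormEntry {R S : Type*} [CommRing R] [CommRing S] (f : R →+* S) (q t : R)
    (i j k l : ℕ) : f (lkFormEntry q t i j k l) = lkFormEntry (f q) (f t) i j k l := by
  unfold lkFormEntry
  split_ifs <;> simp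

lemma lkFormEntry_one_two (i j k l : ℕ) (h : ¬(i = k ∧ j = l)) :
    lkFormEntry (1:ℝ) 2 i j k l = 0 := by
  unfold lkFormEntry
  split_ifs <;> norm_num

theorem lk_form_det_ne_zero (n : ℕ) : (lkFormMat qLK tLK n).det ≠ 0 := by
  intro h
  have h2 : ((lkFormMat qLK tLK n).map lkPhiR).det = 0 := by
    show (lkPhiR.mapMatrix (lkFormMat qLK tLK n)).det = 0
    rw [← RingHom.map_det, h, map_zero]
  have h3 : (lkFormMat qLK tLK n).map lkPhiR = Matrix.diagonal (fun _ => (-3 : ℝ)) := by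
    ext p p'
    show lkPhiR (lkFormEntry qLK tLK _ _ _ _) = _
    rw [map_lkFormEntry, lkPhiR_q, lkPhiR_t]
    by_cases hpp : p = p'
    · subst hpp
      rw [Matrix.diagonal_apply_eq]
      unfold lkFormEntry
      rw [if_pos ⟨rfl, rfl⟩]; norm_num
    · rw [Matrix.diagonal_apply_ne _ hpp]
      apply lkFormEntry_one_two
      rintro ⟨e1, e2⟩
      exact hpp (Subtype.ext (Prod.ext (Fin.val_injective e1) (Fin.val_injective e2)))
  rw [h3, Matrix.det_diagonal] at h2
  simp [pow_eq_zero_iff] at h2
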